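/- Let A_a be a real N_a×N_a matrix, A_o a real N_o×N_o matrix, d > 0, α, β, γ, δ ≥ 0. Suppose λ ∈ σ(A_a) and μ ∈ σ(A_o) are simple eigenvalues satisfying: ξ := α + γ Re λ + β Re μ + δ Re(λμ) > 0; ω := γ Im λ + β Im μ + δ Im(λμ) ≠ 0; and for every pair (λ',μ') ∈ σ(A_a)×σ(A_o) not equal to (λ,μ) or (conj λ, conj μ), one has α + γ Re λ' + β Re μ' + δ Re(λ'μ') < ξ. Let u* := d/ξ and J(u) := (−d + uα) I_{N_aN_o} + uγ (A_a ⊗ I_{N_o}) + uβ (I_{N_a} ⊗ A_o) + uδ (A_a ⊗ A_o). Then the eigenvalues of J(u*) with zero real part are exactly the simple purely imaginary conjugate pair ±i u* ω, every other eigenvalue of J(u*) has strictly negative real part, and the eigenvalue branch η(u) = −d + u(α + γλ + βμ + δλμ) of J(u) satisfies Re η(u*) = 0 with d(Re η)/du = ξ > 0. -/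

import Mathlib

open Matrix Polynomial

/-- The spectrum of a real square matrix: the multiset of complex roots of its
characteristic polynomial. -/
noncomputable def spectrumM {m : Type*} [Fintype m] [DecidableEq m]
    (A : Matrix m m ℝ) : Multiset ℂ :=
  ((A.map Complex.ofReal).charpoly).roots

open Kronecker in
/-- The Jacobian at the neutral equilibrium of the homogeneous multi-topic
belief-formation model:
`J(u) = (−d + uα) I + uγ (A_a ⊗ I) + uβ (I ⊗ A_o) + uδ (A_a ⊗ A_o)`. -/
noncomputable def Jmat {Na No : ℕ} (Aa : Matrix (Fin Na) (Fin Na) ℝ)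
    (Ao : Matrix (Fin No) (Fin No) ℝ) (d u α β γ δ : ℝ) :
    Matrix (Fin Na × Fin No) (Fin Na × Fin No) ℝ :=
  (-d + u * α) • (1 : Matrix (Fin Na × Fin No) (Fin Na × Fin No) ℝ)
    + (u * γ) • (Aa ⊗ₖ (1 : Matrix (Fin No) (Fin No) ℝ))
    + (u * β) • ((1 : Matrix (Fin Na) (Fin Na) ℝ) ⊗ₖ Ao)
    + (u * δ) • (Aa ⊗ₖ Ao)

lemma charmatrix_comp_linear {m : Type*} [Fintype m] [DecidableEq m]
    (M : Matrix m m ℂ) (a b : ℂ) :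
    ((a • (1 : Matrix m m ℂ) + b • M).charpoly).comp (C b * X + C a)
      = C (b ^ Fintype.card m) * M.charpoly := by
  have hcomp : ∀ p : ℂ[X], p.comp (C b * X + C a) = eval₂RingHom C (C b * X + C a) p := by
    intro p; rfl
  rw [Matrix.charpoly, hcomp, RingHom.map_det, RingHom.mapMatrix_apply]
  have : (charmatrix (a • (1 : Matrix m m ℂ) + b • M)).map (eval₂RingHom C (C b * X + C a))
      = C b • charmatrix M := by
    refine Matrix.ext fun i j => ?_
    simp only [Matrix.map_apply, charmatrix_apply, Matrix.smul_apply, Matrix.add_apply,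
      Matrix.one_apply, Matrix.diagonal_apply, smul_eq_mul, coe_eval₂RingHom]
    by_cases h : i = j
    · simp only [h, if_pos rfl, if_true, eval₂_sub, eval₂_add, eval₂_mul, eval₂_X, eval₂_C, eval₂_one, eval₂_zero,
        C_add, C_mul, C_1, C_0]
      ring
    · simp only [if_neg h, if_true, zero_sub, eval₂_neg, eval₂_add, eval₂_mul, eval₂_X, eval₂_C, eval₂_one, eval₂_zero,
        C_add, C_mul, C_1, C_0]
      ring
  rw [this, Matrix.det_smul, ← C_pow, Matrix.charpoly]


lemma charpoly_affine {m : Type*} [Fintype m] [DecidableEq m]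
    (M : Matrix m m ℂ) (a b : ℂ) :
    (a • (1 : Matrix m m ℂ) + b • M).charpoly
      = (M.charpoly.roots.map (fun μ => X - C (a + b * μ))).prod := by
  have hcard : Multiset.card M.charpoly.roots = Fintype.card m := by
    rw [(Polynomial.splits_iff_card_roots).mp (IsAlgClosed.splits M.charpoly),
      Matrix.charpoly_natDegree_eq_dim]
  by_cases hb : b = 0
  · subst hb
    simp only [zero_smul, add_zero, zero_mul, add_zero]
    have h1 : charmatrix (a • (1 : Matrix m m ℂ)) = Matrix.diagonal (fun _ => X - C a) := by
      refine Matrix.ext fun i j => ?_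
      by_cases h : i = j
      · subst h; simp [charmatrix_apply]
      · simp [charmatrix_apply, h, Matrix.one_apply_ne h, Matrix.diagonal_apply_ne _ h]
    rw [Matrix.charpoly, h1, Matrix.det_diagonal, Finset.prod_const]
    have h2 : M.charpoly.roots.map (fun _ : ℂ => X - C a)
        = Multiset.replicate (Fintype.card m) (X - C a) := by
      rw [Multiset.map_const', hcard]
    rw [h2, Multiset.prod_replicate, Finset.card_univ]
  · set ℓ := C b * X + C a with hℓ
    set ℓ' := C b⁻¹ * (X - C a) with hℓ'
    have hll' : ℓ.comp ℓ' = X := by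
      simp only [hℓ, hℓ', add_comp, mul_comp, C_comp, X_comp]
      rw [← mul_assoc, ← C_mul, mul_inv_cancel₀ hb, C_1, one_mul]
      ring
    have key : ((a • (1 : Matrix m m ℂ) + b • M).charpoly).comp ℓ
        = ((M.charpoly.roots.map (fun μ => X - C (a + b * μ))).prod).comp ℓ := by
      rw [charmatrix_comp_linear]
      have hcomp : ∀ p : ℂ[X], p.comp ℓ = eval₂RingHom C ℓ p := fun p => rfl
      rw [hcomp, map_multiset_prod, Multiset.map_map]
      have h3 : Multiset.map (⇑(eval₂RingHom C ℓ) ∘ fun μ => X - C (a + b * μ))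
          M.charpoly.roots = Multiset.map (fun μ => C b * (X - C μ)) M.charpoly.roots := by
        refine Multiset.map_congr rfl fun μ _ => ?_
        simp only [Function.comp_apply, coe_eval₂RingHom, C_add, C_mul, eval₂_sub, eval₂_add,
          eval₂_mul, eval₂_X, eval₂_C, hℓ]
        ring
      rw [h3, Multiset.prod_map_mul, Multiset.map_const', Multiset.prod_replicate, hcard,
        ← C_pow, ← (IsAlgClosed.splits M.charpoly).eq_prod_roots_of_monic M.charpoly_monic]
    calc (a • (1 : Matrix m m ℂ) + b • M).charpoly
        = (((a • (1 : Matrix m m ℂ) + b • M).charpoly).comp ℓ).comp ℓ' := by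
          rw [Polynomial.comp_assoc, hll', comp_X]
      _ = (((M.charpoly.roots.map (fun μ => X - C (a + b * μ))).prod).comp ℓ).comp ℓ' := by
          rw [key]
      _ = (M.charpoly.roots.map (fun μ => X - C (a + b * μ))).prod := by
          rw [Polynomial.comp_assoc, hll', comp_X]

set_option maxHeartbeats 1000000 in
lemma exists_conj_eigcol (n : ℕ) (A : Matrix (Fin (n+1)) (Fin (n+1)) ℂ) :
    ∃ (z : ℂ) (P Q : Matrix (Fin (n+1)) (Fin (n+1)) ℂ),
      P * Q = 1 ∧ Q * P = 1 ∧ (Q * A * P) 0 0 = z ∧ ∀ i, i ≠ 0 → (Q * A * P) i 0 = 0 := by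
  set f : Module.End ℂ (Fin (n+1) → ℂ) := Matrix.mulVecLin A with hf
  obtain ⟨z, hz⟩ := Module.End.exists_eigenvalue f
  obtain ⟨v, hv⟩ := hz.exists_hasEigenvector
  have hvne : v ≠ 0 := hv.right
  have hli : LinearIndepOn ℂ id ({v} : Set (Fin (n+1) → ℂ)) :=
    (linearIndepOn_singleton_iff ℂ).mpr hvne
  haveI : Fintype ↥(hli.extend (Set.subset_univ _)) :=
    FiniteDimensional.fintypeBasisIndex (Module.Basis.extend hli)
  have hmem : v ∈ hli.extend (Set.subset_univ _) :=
    hli.subset_extend (Set.subset_univ _) (rfl : v ∈ ({v} : Set _))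
  have hcard : Fintype.card ↥(hli.extend (Set.subset_univ _)) = n + 1 := by
    rw [← Module.finrank_eq_card_basis (Module.Basis.extend hli)]
    simp
  let g : ↥(hli.extend (Set.subset_univ _)) ≃ Fin (n+1) :=
    Fintype.equivFinOfCardEq hcard
  let x0 : ↥(hli.extend (Set.subset_univ _)) := ⟨v, hmem⟩
  let e : ↥(hli.extend (Set.subset_univ _)) ≃ Fin (n+1) := g.trans (Equiv.swap (g x0) 0)
  let b : Module.Basis (Fin (n+1)) ℂ (Fin (n+1) → ℂ) := (Module.Basis.extend hli).reindex e
  have hb0 : b 0 = v := by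
    rw [Module.Basis.reindex_apply]
    have h2 : e.symm 0 = x0 := by
      rw [Equiv.symm_apply_eq]
      simp [e, Equiv.swap_apply_left]
    rw [h2, Module.Basis.extend_apply_self]
  let eb : Module.Basis (Fin (n+1)) ℂ (Fin (n+1) → ℂ) := Pi.basisFun ℂ (Fin (n+1))
  have hA : A = LinearMap.toMatrix eb eb f := by
    rw [LinearMap.toMatrix_eq_toMatrix', hf, ← Matrix.toLin'_apply', LinearMap.toMatrix'_toLin']
  have hconj : b.toMatrix ⇑eb * A * eb.toMatrix ⇑b = LinearMap.toMatrix b b f := by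
    conv_lhs => rw [hA]
    exact basis_toMatrix_mul_linearMap_toMatrix_mul_basis_toMatrix b eb b eb f
  refine ⟨z, eb.toMatrix ⇑b, b.toMatrix ⇑eb,
    Module.Basis.toMatrix_mul_toMatrix_flip _ _, Module.Basis.toMatrix_mul_toMatrix_flip _ _, ?_, ?_⟩
  · rw [hconj, LinearMap.toMatrix_apply, hb0, hv.apply_eq_smul, ← hb0]
    simp [Module.Basis.repr_self]
  · intro i hi
    rw [hconj, LinearMap.toMatrix_apply, hb0, hv.apply_eq_smul, ← hb0]
    simp [Module.Basis.repr_self, Finsupp.single_apply, (Ne.symm hi)]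

variable {R : Type*} [CommRing R]

lemma charpoly_conj_inv {m : Type*} [Fintype m] [DecidableEq m]
    (A P Q : Matrix m m R) (hPQ : P * Q = 1) (hQP : Q * P = 1) :
    (Q * A * P).charpoly = A.charpoly := by
  have hmap : ∀ N N' : Matrix m m R, (N * N').map (C : R →+* R[X])
      = N.map C * N'.map C := fun N N' => by
    simpa using (RingHom.mapMatrix (C : R →+* R[X])).map_mul N N'
  have hsc : Q.map (C : R →+* R[X]) * (Matrix.scalar m (X : R[X])) * P.map C
      = Matrix.scalar m (X : R[X]) := by
    rw [← scalar_commute (X : R[X]) (fun r' => Commute.all _ _) (Q.map C), mul_assoc, ← hmap, hQP]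
    simp
  have hc : charmatrix (Q * A * P) = Q.map C * charmatrix A * P.map C := by
    rw [charmatrix, charmatrix, RingHom.mapMatrix_apply, RingHom.mapMatrix_apply, hmap, hmap,
      mul_sub, sub_mul, hsc]
  have hdet1 : (Q.map (C : R →+* R[X])).det * (P.map C).det = 1 := by
    rw [← det_mul, ← hmap, hQP]; simp
  rw [Matrix.charpoly, hc, det_mul, det_mul, Matrix.charpoly]
  ring_nf
  rw [mul_comm ((Q.map C).det) _, mul_assoc, hdet1, mul_one]

lemma charpoly_submatrix_equiv {l m : Type*} [Fintype l] [DecidableEq l] [Fintype m]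
    [DecidableEq m] (M : Matrix m m R) (e : l ≃ m) :
    (M.submatrix e e).charpoly = M.charpoly := by
  rw [← Matrix.charpoly_reindex e.symm M, Matrix.reindex_apply]
  simp

lemma charpoly_sum_prod {α β γ : Type*} [Fintype α] [DecidableEq α] [Fintype β] [DecidableEq β]
    [Fintype γ] [DecidableEq γ]
    (M : Matrix ((α ⊕ β) × γ) ((α ⊕ β) × γ) R)
    (h0 : ∀ (b : β) (k : γ) (a : α) (l : γ), M (Sum.inr b, k) (Sum.inl a, l) = 0) :
    M.charpoly = (M.submatrix (Prod.map Sum.inl id) (Prod.map Sum.inl id)).charpoly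
      * (M.submatrix (Prod.map Sum.inr id) (Prod.map Sum.inr id)).charpoly := by
  set E := Equiv.sumProdDistrib α β γ with hE
  have h1 : M.submatrix E.symm E.symm
      = fromBlocks (M.submatrix (Prod.map Sum.inl id) (Prod.map Sum.inl id))
        (M.submatrix (Prod.map Sum.inl id) (Prod.map Sum.inr id)) 0
        (M.submatrix (Prod.map Sum.inr id) (Prod.map Sum.inr id)) := by
    ext x y
    rcases x with ⟨i, k⟩ | ⟨i, k⟩ <;> rcases y with ⟨j, l⟩ | ⟨j, l⟩ <;>
      simp [hE, Equiv.sumProdDistrib, fromBlocks, h0]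
  rw [← charpoly_submatrix_equiv M E.symm, h1, Matrix.charpoly_fromBlocks_zero₂₁]

open Kronecker in
lemma charpoly_kron_sum (No : ℕ) (Cm Dm : Matrix (Fin No) (Fin No) ℂ) :
    ∀ n (A : Matrix (Fin n) (Fin n) ℂ),
      (A ⊗ₖ Cm + (1 : Matrix (Fin n) (Fin n) ℂ) ⊗ₖ Dm).charpoly
        = (A.charpoly.roots.map (fun z => (z • Cm + Dm).charpoly)).prod := by
  intro n
  induction n with
  | zero =>
    intro A
    have h1 : A.charpoly = 1 := by rw [Matrix.charpoly, Matrix.det_isEmpty]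
    rw [Matrix.charpoly, Matrix.det_isEmpty, h1]
    simp
  | succ n IH =>
    intro A
    obtain ⟨z, P, Q, hPQ, hQP, h00, hcol⟩ := exists_conj_eigcol n A
    set M := Q * A * P with hM
    have hchA : M.charpoly = A.charpoly := charpoly_conj_inv A P Q hPQ hQP
    have e1 : (Q ⊗ₖ (1 : Matrix (Fin No) (Fin No) ℂ)) * (A ⊗ₖ Cm)
        * (P ⊗ₖ (1 : Matrix (Fin No) (Fin No) ℂ)) = M ⊗ₖ Cm := by
      rw [← Matrix.mul_kronecker_mul, ← Matrix.mul_kronecker_mul, one_mul, mul_one]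
    have e2 : (Q ⊗ₖ (1 : Matrix (Fin No) (Fin No) ℂ))
        * ((1 : Matrix (Fin (n+1)) (Fin (n+1)) ℂ) ⊗ₖ Dm)
        * (P ⊗ₖ (1 : Matrix (Fin No) (Fin No) ℂ))
        = (1 : Matrix (Fin (n+1)) (Fin (n+1)) ℂ) ⊗ₖ Dm := by
      rw [← Matrix.mul_kronecker_mul, ← Matrix.mul_kronecker_mul, mul_one, one_mul, mul_one,
        hQP]
    have hE : M ⊗ₖ Cm + (1 : Matrix (Fin (n+1)) (Fin (n+1)) ℂ) ⊗ₖ Dm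
        = (Q ⊗ₖ (1 : Matrix (Fin No) (Fin No) ℂ))
          * (A ⊗ₖ Cm + (1 : Matrix (Fin (n+1)) (Fin (n+1)) ℂ) ⊗ₖ Dm)
          * (P ⊗ₖ (1 : Matrix (Fin No) (Fin No) ℂ)) := by
      rw [mul_add, add_mul, e1, e2]
    have hPQ' : (P ⊗ₖ (1 : Matrix (Fin No) (Fin No) ℂ))
        * (Q ⊗ₖ (1 : Matrix (Fin No) (Fin No) ℂ)) = 1 := by
      rw [← Matrix.mul_kronecker_mul, hPQ, one_mul, Matrix.one_kronecker_one]
    have hQP' : (Q ⊗ₖ (1 : Matrix (Fin No) (Fin No) ℂ))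
        * (P ⊗ₖ (1 : Matrix (Fin No) (Fin No) ℂ)) = 1 := by
      rw [← Matrix.mul_kronecker_mul, hQP, one_mul, Matrix.one_kronecker_one]
    have hKc : (M ⊗ₖ Cm + (1 : Matrix (Fin (n+1)) (Fin (n+1)) ℂ) ⊗ₖ Dm).charpoly
        = (A ⊗ₖ Cm + (1 : Matrix (Fin (n+1)) (Fin (n+1)) ℂ) ⊗ₖ Dm).charpoly := by
      rw [hE]
      exact charpoly_conj_inv _ _ _ hPQ' hQP'
    -- reindex to Fin 1 ⊕ Fin n
    set F : Fin 1 ⊕ Fin n ≃ Fin (n+1) := finSumFinEquiv.trans (finCongr (Nat.add_comm 1 n))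
      with hFdef
    have hF0 : F (Sum.inl 0) = 0 := by
      simp [hFdef, Fin.ext_iff]
    have hFr : ∀ b : Fin n, F (Sum.inr b) ≠ 0 := by
      intro b h
      rw [Fin.ext_iff] at h
      simp [hFdef] at h
    set M' := M.submatrix F F with hM'def
    have hM'ch : M'.charpoly = A.charpoly := (charpoly_submatrix_equiv M F).trans hchA
    have hM'r0 : ∀ (b : Fin n) (a : Fin 1), M' (Sum.inr b) (Sum.inl a) = 0 := by
      intro b a
      have ha : a = 0 := Subsingleton.elim _ _
      rw [hM'def, Matrix.submatrix_apply, ha, hF0]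
      exact hcol _ (hFr b)
    have hM'00 : M' (Sum.inl 0) (Sum.inl 0) = z := by
      rw [hM'def, Matrix.submatrix_apply, hF0]
      exact h00
    set K := M' ⊗ₖ Cm + (1 : Matrix (Fin 1 ⊕ Fin n) (Fin 1 ⊕ Fin n) ℂ) ⊗ₖ Dm with hKdef
    have hKsub : K = (M ⊗ₖ Cm + (1 : Matrix (Fin (n+1)) (Fin (n+1)) ℂ) ⊗ₖ Dm).submatrix
        (Prod.map F id) (Prod.map F id) := by
      ext ⟨x, k⟩ ⟨y, l⟩
      simp only [hKdef, hM'def, Matrix.add_apply, Matrix.kroneckerMap_apply,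
        Matrix.submatrix_apply, Prod.map_apply, id_eq, Matrix.one_apply,
        EmbeddingLike.apply_eq_iff_eq]
    have hKch : K.charpoly = (M ⊗ₖ Cm + (1 : Matrix (Fin (n+1)) (Fin (n+1)) ℂ) ⊗ₖ Dm).charpoly := by
      rw [hKsub]
      have : (Prod.map F id : (Fin 1 ⊕ Fin n) × Fin No → Fin (n+1) × Fin No)
          = ⇑(F.prodCongr (Equiv.refl (Fin No))) := by rfl
      rw [this]
      exact charpoly_submatrix_equiv _ (F.prodCongr (Equiv.refl (Fin No)))
    -- block split
    have hsplit := charpoly_sum_prod K (by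
      intro b k a l
      simp [hKdef, hM'r0, Matrix.one_apply])
    -- top block
    have hT : K.submatrix (Prod.map Sum.inl id) (Prod.map Sum.inl id)
        = (z • Cm + Dm).submatrix (fun p : Fin 1 × Fin No => p.2)
          (fun p : Fin 1 × Fin No => p.2) := by
      ext ⟨a, k⟩ ⟨a', l⟩
      have ha : a = 0 := Subsingleton.elim _ _
      have ha' : a' = 0 := Subsingleton.elim _ _
      subst ha; subst ha'
      simp [hKdef, hM'00, Matrix.one_apply]
    have hTch : (K.submatrix (Prod.map Sum.inl id) (Prod.map Sum.inl id)).charpoly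
        = (z • Cm + Dm).charpoly := by
      rw [hT]
      exact charpoly_submatrix_equiv _
        ⟨fun p : Fin 1 × Fin No => p.2, fun k => (0, k),
          fun p => by
            obtain ⟨a, k⟩ := p
            have ha : a = 0 := Subsingleton.elim _ _
            simp [ha],
          fun k => rfl⟩
    -- bottom block
    set M'' := M'.submatrix Sum.inr Sum.inr with hM''def
    have hB : K.submatrix (Prod.map Sum.inr id) (Prod.map Sum.inr id)
        = M'' ⊗ₖ Cm + (1 : Matrix (Fin n) (Fin n) ℂ) ⊗ₖ Dm := by
      ext ⟨b, k⟩ ⟨b', l⟩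
      simp [hKdef, hM''def, Matrix.one_apply]
    -- charpoly of A splits
    have h21 : M'.toBlocks₂₁ = 0 := by
      ext b a
      exact hM'r0 b a
    have h11 : (M'.toBlocks₁₁).charpoly = X - C z := by
      rw [Matrix.charpoly, Matrix.det_fin_one]
      rw [charmatrix_apply]
      simp [Matrix.toBlocks₁₁, hM'00]
    have h22 : M'.toBlocks₂₂ = M'' := rfl
    have hsplitA : A.charpoly = (X - C z) * M''.charpoly := by
      rw [← hM'ch, ← Matrix.fromBlocks_toBlocks M', h21, Matrix.charpoly_fromBlocks_zero₂₁,
        h11, h22]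
    have hroots : A.charpoly.roots = z ::ₘ M''.charpoly.roots := by
      rw [hsplitA, Polynomial.roots_mul (mul_ne_zero (X_sub_C_ne_zero z)
        (Matrix.charpoly_monic M'').ne_zero), Polynomial.roots_X_sub_C,
        Multiset.singleton_add]
    rw [← hKc, ← hKch, hsplit, hTch, hB, IH M'', hroots]
    simp

open Kronecker in
lemma Jmat_map_ofReal {Na No : ℕ} (Aa : Matrix (Fin Na) (Fin Na) ℝ)
    (Ao : Matrix (Fin No) (Fin No) ℝ) (d u α β γ δ : ℝ) :
    (Jmat Aa Ao d u α β γ δ).map Complex.ofReal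
      = (Aa.map Complex.ofReal) ⊗ₖ
          (((u * γ : ℝ) : ℂ) • (1 : Matrix (Fin No) (Fin No) ℂ)
            + ((u * δ : ℝ) : ℂ) • (Ao.map Complex.ofReal))
        + (1 : Matrix (Fin Na) (Fin Na) ℂ) ⊗ₖ
          (((-d + u * α : ℝ) : ℂ) • (1 : Matrix (Fin No) (Fin No) ℂ)
            + ((u * β : ℝ) : ℂ) • (Ao.map Complex.ofReal)) := by
  ext ⟨i, k⟩ ⟨j, l⟩
  by_cases hij : i = j <;> by_cases hkl : k = l <;>
    simp [Jmat, Matrix.one_apply, hij, hkl, Prod.ext_iff] <;> push_cast <;> ring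

lemma spectrumM_Jmat {Na No : ℕ} (Aa : Matrix (Fin Na) (Fin Na) ℝ)
    (Ao : Matrix (Fin No) (Fin No) ℝ) (d u α β γ δ : ℝ) :
    spectrumM (Jmat Aa Ao d u α β γ δ)
      = (spectrumM Aa).bind (fun z => (spectrumM Ao).map
          (fun μ => ((-d + u * α : ℝ) : ℂ) + ((u * γ : ℝ) : ℂ) * z
            + ((u * β : ℝ) : ℂ) * μ + ((u * δ : ℝ) : ℂ) * (z * μ))) := by
  unfold spectrumM
  set sA := ((Aa.map Complex.ofReal).charpoly).roots with hsA
  set sO := ((Ao.map Complex.ofReal).charpoly).roots with hsO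
  set F : ℂ → ℂ → ℂ := fun z μ => ((-d + u * α : ℝ) : ℂ) + ((u * γ : ℝ) : ℂ) * z
    + ((u * β : ℝ) : ℂ) * μ + ((u * δ : ℝ) : ℂ) * (z * μ) with hF
  rw [Jmat_map_ofReal, charpoly_kron_sum]
  have hz : ∀ z : ℂ,
      (z • (((u * γ : ℝ) : ℂ) • (1 : Matrix (Fin No) (Fin No) ℂ)
          + ((u * δ : ℝ) : ℂ) • (Ao.map Complex.ofReal))
        + (((-d + u * α : ℝ) : ℂ) • (1 : Matrix (Fin No) (Fin No) ℂ)
          + ((u * β : ℝ) : ℂ) • (Ao.map Complex.ofReal)))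
      = (((-d + u * α : ℝ) : ℂ) + ((u * γ : ℝ) : ℂ) * z) • (1 : Matrix (Fin No) (Fin No) ℂ)
        + (((u * β : ℝ) : ℂ) + ((u * δ : ℝ) : ℂ) * z) • (Ao.map Complex.ofReal) := by
    intro z
    rw [smul_add, smul_smul, smul_smul, add_smul, add_smul]
    abel_nf
    ring_nf
    abel
  have hstep : Multiset.map (fun z =>
      (z • (((u * γ : ℝ) : ℂ) • (1 : Matrix (Fin No) (Fin No) ℂ)
          + ((u * δ : ℝ) : ℂ) • (Ao.map Complex.ofReal))
        + (((-d + u * α : ℝ) : ℂ) • (1 : Matrix (Fin No) (Fin No) ℂ)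
          + ((u * β : ℝ) : ℂ) • (Ao.map Complex.ofReal))).charpoly) sA
      = Multiset.map (fun z => (sO.map (fun μ => X - C (F z μ))).prod) sA := by
    refine Multiset.map_congr rfl fun z _ => ?_
    rw [hz z, charpoly_affine]
    congr 1
    refine Multiset.map_congr rfl fun μ _ => ?_
    rw [hF]
    ring_nf
  rw [hstep, ← Multiset.prod_bind]
  have hb : (sA.bind (fun z => sO.map (fun μ => X - C (F z μ))))
      = ((sA.bind (fun z => sO.map (F z))).map (fun w => X - C w)) := by
    simp [Multiset.map_bind, Multiset.map_map, Function.comp]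
  rw [hb, Polynomial.roots_multiset_prod_X_sub_C]

lemma sum_map_indicator (s : Multiset ℂ) (a : ℂ) :
    (s.map (fun z => if z = a then (1 : ℕ) else 0)).sum = s.count a := by
  induction s using Multiset.induction with
  | empty => simp
  | cons b t ih =>
    rw [Multiset.map_cons, Multiset.sum_cons, ih, Multiset.count_cons]
    by_cases h : b = a
    · subst h; simp [Nat.add_comm]
    · rw [if_neg h, if_neg (fun hh => h hh.symm), Nat.zero_add, Nat.add_zero]

lemma conj_count {N : ℕ} (B : Matrix (Fin N) (Fin N) ℝ) (z : ℂ) :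
    ((B.map Complex.ofReal).charpoly).roots.count ((starRingEnd ℂ) z)
      = ((B.map Complex.ofReal).charpoly).roots.count z := by
  set q := (B.map Complex.ofReal).charpoly with hq
  have hmapq : q.map (starRingEnd ℂ) = q := by
    rw [hq, show (B.map Complex.ofReal) = B.map ⇑Complex.ofRealHom from rfl,
      Matrix.charpoly_map, Polynomial.map_map]
    congr 1
    exact RingHom.ext fun r => Complex.conj_ofReal r
  calc q.roots.count ((starRingEnd ℂ) z)
      = ((q.map (starRingEnd ℂ)).roots).count ((starRingEnd ℂ) z) := by rw [hmapq]
    _ = (q.roots.map (starRingEnd ℂ)).count ((starRingEnd ℂ) z) := by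
        rw [(IsAlgClosed.splits q).roots_map]
    _ = q.roots.count z := Multiset.count_map_eq_count' _ _ (RingHom.injective _) z

theorem stmt15 {Na No : ℕ} (Aa : Matrix (Fin Na) (Fin Na) ℝ)
    (Ao : Matrix (Fin No) (Fin No) ℝ) (d α β γ δ ξ ω ustar : ℝ) (lam mu : ℂ)
    (hd : 0 < d) (hα : 0 ≤ α) (hβ : 0 ≤ β) (hγ : 0 ≤ γ) (hδ : 0 ≤ δ)
    (hlam : lam ∈ spectrumM Aa)
    (hlams : Polynomial.rootMultiplicity lam ((Aa.map Complex.ofReal).charpoly) = 1)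
    (hmu : mu ∈ spectrumM Ao)
    (hmus : Polynomial.rootMultiplicity mu ((Ao.map Complex.ofReal).charpoly) = 1)
    (hξdef : ξ = α + γ * lam.re + β * mu.re + δ * (lam * mu).re)
    (hξ : 0 < ξ)
    (hωdef : ω = γ * lam.im + β * mu.im + δ * (lam * mu).im)
    (hω : ω ≠ 0)
    (hdom : ∀ lam' ∈ spectrumM Aa, ∀ mu' ∈ spectrumM Ao,
      (lam', mu') ≠ (lam, mu) →
      (lam', mu') ≠ (starRingEnd ℂ lam, starRingEnd ℂ mu) →
      α + γ * lam'.re + β * mu'.re + δ * (lam' * mu').re < ξ)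
    (hust : ustar = d / ξ) :
    -- the purely imaginary eigenvalues are exactly the simple pair ± i u* ω
    Complex.I * (ustar * ω) ∈ spectrumM (Jmat Aa Ao d ustar α β γ δ) ∧
    Polynomial.rootMultiplicity (Complex.I * (ustar * ω))
      (((Jmat Aa Ao d ustar α β γ δ).map Complex.ofReal).charpoly) = 1 ∧
    -(Complex.I * (ustar * ω)) ∈ spectrumM (Jmat Aa Ao d ustar α β γ δ) ∧
    Polynomial.rootMultiplicity (-(Complex.I * (ustar * ω)))
      (((Jmat Aa Ao d ustar α β γ δ).map Complex.ofReal).charpoly) = 1 ∧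
    (∀ η ∈ spectrumM (Jmat Aa Ao d ustar α β γ δ), η.re = 0 →
      η = Complex.I * (ustar * ω) ∨ η = -(Complex.I * (ustar * ω))) ∧
    -- every other eigenvalue has strictly negative real part
    (∀ η ∈ spectrumM (Jmat Aa Ao d ustar α β γ δ), η.re ≠ 0 → η.re < 0) ∧
    -- the eigenvalue branch crosses the imaginary axis transversally at u*
    (-(d : ℂ) + (ustar : ℂ) * ((α : ℂ) + (γ : ℂ) * lam + (β : ℂ) * mu
      + (δ : ℂ) * lam * mu)).re = 0 ∧
    HasDerivAt (fun u : ℝ => (-(d : ℂ) + (u : ℂ) * ((α : ℂ) + (γ : ℂ) * lam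
      + (β : ℂ) * mu + (δ : ℂ) * lam * mu)).re) ξ ustar := by
  have hξne : ξ ≠ 0 := ne_of_gt hξ
  have hu : 0 < ustar := by rw [hust]; positivity
  have hune : ustar ≠ 0 := ne_of_gt hu
  have huξ : ustar * ξ = d := by rw [hust]; field_simp
  set F : ℂ → ℂ → ℂ := fun z μ => ((-d + ustar * α : ℝ) : ℂ) + ((ustar * γ : ℝ) : ℂ) * z
    + ((ustar * β : ℝ) : ℂ) * μ + ((ustar * δ : ℝ) : ℂ) * (z * μ) with hF
  have hS : spectrumM (Jmat Aa Ao d ustar α β γ δ)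
      = (spectrumM Aa).bind (fun z => (spectrumM Ao).map (F z)) :=
    spectrumM_Jmat Aa Ao d ustar α β γ δ
  have hre : ∀ z μ : ℂ, (F z μ).re
      = -d + ustar * (α + γ * z.re + β * μ.re + δ * (z * μ).re) := by
    intro z μ
    simp only [hF, Complex.add_re, Complex.mul_re, Complex.ofReal_re, Complex.ofReal_im,
      Complex.mul_im]
    ring
  have him : ∀ z μ : ℂ, (F z μ).im
      = ustar * (γ * z.im + β * μ.im + δ * (z * μ).im) := by
    intro z μ
    simp only [hF, Complex.add_im, Complex.mul_re, Complex.ofReal_re, Complex.ofReal_im,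
      Complex.mul_im, Complex.add_re]
    ring
  set w : ℂ := Complex.I * ((ustar : ℂ) * (ω : ℂ)) with hwdef
  have hwre : w.re = 0 := by simp [hwdef]
  have hwim : w.im = ustar * ω := by simp [hwdef]
  have hFlm : F lam mu = w := by
    refine Complex.ext ?_ ?_
    · rw [hre, hwre, ← hξdef]
      linarith [huξ]
    · rw [him, hwim, hωdef]
  have hconjF : ∀ z μ : ℂ, F ((starRingEnd ℂ) z) ((starRingEnd ℂ) μ)
      = (starRingEnd ℂ) (F z μ) := by
    intro z μ
    simp only [hF, map_add, _root_.map_mul, Complex.conj_ofReal]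
  have hcw : (starRingEnd ℂ) w = -w := by
    refine Complex.ext ?_ ?_ <;> simp [hwre]
  have hFcc : F ((starRingEnd ℂ) lam) ((starRingEnd ℂ) mu) = -w := by
    rw [hconjF, hFlm, hcw]
  have hwneg : w ≠ -w := by
    intro h
    have h2 := congrArg Complex.im h
    rw [Complex.neg_im, hwim] at h2
    exact (mul_ne_zero hune hω) (by linarith)
  -- counts of lam, mu, and their conjugates
  have hcl : (spectrumM Aa).count lam = 1 := by
    rw [spectrumM, Polynomial.count_roots]; exact hlams
  have hcm : (spectrumM Ao).count mu = 1 := by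
    rw [spectrumM, Polynomial.count_roots]; exact hmus
  have hccl : (spectrumM Aa).count ((starRingEnd ℂ) lam) = 1 := by
    rw [spectrumM, conj_count]
    rw [spectrumM] at hcl; exact hcl
  have hccm : (spectrumM Ao).count ((starRingEnd ℂ) mu) = 1 := by
    rw [spectrumM, conj_count]
    rw [spectrumM] at hcm; exact hcm
  have hclam : (starRingEnd ℂ) lam ∈ spectrumM Aa :=
    Multiset.count_pos.mp (by rw [hccl]; norm_num)
  have hcmu : (starRingEnd ℂ) mu ∈ spectrumM Ao :=
    Multiset.count_pos.mp (by rw [hccm]; norm_num)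
  -- real part zero forces the special pairs
  have hpair : ∀ z ∈ spectrumM Aa, ∀ μ ∈ spectrumM Ao, (F z μ).re = 0 →
      (z = lam ∧ μ = mu) ∨ (z = (starRingEnd ℂ) lam ∧ μ = (starRingEnd ℂ) mu) := by
    intro z hz μ hμ h0
    by_contra hcon
    push_neg at hcon
    obtain ⟨h1, h2⟩ := hcon
    have hne1 : (z, μ) ≠ (lam, mu) :=
      fun h => h1 (congrArg Prod.fst h) (congrArg Prod.snd h)
    have hne2 : (z, μ) ≠ ((starRingEnd ℂ) lam, (starRingEnd ℂ) mu) :=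
      fun h => h2 (congrArg Prod.fst h) (congrArg Prod.snd h)
    have hlt := hdom z hz μ hμ hne1 hne2
    rw [hre] at h0
    have hg : ustar * (α + γ * z.re + β * μ.re + δ * (z * μ).re) = ustar * ξ := by
      rw [huξ]; linarith
    have := mul_left_cancel₀ hune hg
    linarith
  -- the iff characterisations
  have hiffw : ∀ z ∈ spectrumM Aa, ∀ μ ∈ spectrumM Ao, (F z μ = w ↔ (z = lam ∧ μ = mu)) := by
    intro z hz μ hμ
    constructor
    · intro he
      have h0 : (F z μ).re = 0 := by rw [he, hwre]
      rcases hpair z hz μ hμ h0 with h | h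
      · exact h
      · exfalso
        rw [h.1, h.2, hFcc] at he
        exact hwneg he.symm
    · rintro ⟨rfl, rfl⟩
      exact hFlm
  have hiffw' : ∀ z ∈ spectrumM Aa, ∀ μ ∈ spectrumM Ao,
      (F z μ = -w ↔ (z = (starRingEnd ℂ) lam ∧ μ = (starRingEnd ℂ) mu)) := by
    intro z hz μ hμ
    constructor
    · intro he
      have h0 : (F z μ).re = 0 := by rw [he, Complex.neg_re, hwre, neg_zero]
      rcases hpair z hz μ hμ h0 with h | h
      · exfalso
        rw [h.1, h.2, hFlm] at he
        exact hwneg he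
      · exact h
    · rintro ⟨rfl, rfl⟩
      exact hFcc
  -- generic count computation
  have hcnt : ∀ (w0 l0 m0 : ℂ), (spectrumM Aa).count l0 = 1 → (spectrumM Ao).count m0 = 1 →
      (∀ z ∈ spectrumM Aa, ∀ μ ∈ spectrumM Ao, (F z μ = w0 ↔ (z = l0 ∧ μ = m0))) →
      (spectrumM (Jmat Aa Ao d ustar α β γ δ)).count w0 = 1 := by
    intro w0 l0 m0 hl hm hiff
    rw [hS, Multiset.count_bind]
    have hmapeq : Multiset.map (fun z => Multiset.count w0 ((spectrumM Ao).map (F z)))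
        (spectrumM Aa)
        = Multiset.map (fun z => if z = l0 then (1 : ℕ) else 0) (spectrumM Aa) := by
      refine Multiset.map_congr rfl fun z hz => ?_
      by_cases hzl : z = l0
      · subst hzl
        rw [if_pos rfl, Multiset.count_map]
        have hfe : Multiset.filter (fun μ => w0 = F z μ) (spectrumM Ao)
            = Multiset.filter (fun μ => m0 = μ) (spectrumM Ao) := by
          refine Multiset.filter_congr fun μ hμ => ?_
          constructor
          · intro he
            exact (((hiff z hz μ hμ).mp he.symm).2).symm
          · intro he
            exact ((hiff z hz μ hμ).mpr ⟨rfl, he.symm⟩).symm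
        rw [hfe, ← Multiset.count_eq_card_filter_eq, hm]
      · rw [if_neg hzl, Multiset.count_eq_zero]
        intro hmem
        obtain ⟨μ, hμ, hFe⟩ := Multiset.mem_map.mp hmem
        exact hzl ((hiff z hz μ hμ).mp hFe).1
    rw [hmapeq, sum_map_indicator, hl]
  have hcntw : (spectrumM (Jmat Aa Ao d ustar α β γ δ)).count w = 1 :=
    hcnt w lam mu hcl hcm hiffw
  have hcntw' : (spectrumM (Jmat Aa Ao d ustar α β γ δ)).count (-w) = 1 :=
    hcnt (-w) ((starRingEnd ℂ) lam) ((starRingEnd ℂ) mu) hccl hccm hiffw'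
  refine ⟨?_, ?_, ?_, ?_, ?_, ?_, ?_, ?_⟩
  · exact Multiset.count_pos.mp (by rw [hcntw]; norm_num)
  · rw [← Polynomial.count_roots]
    exact hcntw
  · exact Multiset.count_pos.mp (by rw [hcntw']; norm_num)
  · rw [← Polynomial.count_roots]
    exact hcntw'
  · intro η hη h0
    rw [hS] at hη
    obtain ⟨z, hz, hη2⟩ := Multiset.mem_bind.mp hη
    obtain ⟨μ, hμ, hFe⟩ := Multiset.mem_map.mp hη2
    have h0' : (F z μ).re = 0 := by rw [hFe]; exact h0
    rcases hpair z hz μ hμ h0' with h | h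
    · left; rw [← hFe, h.1, h.2, hFlm]
    · right; rw [← hFe, h.1, h.2, hFcc]
  · intro η hη h0
    rw [hS] at hη
    obtain ⟨z, hz, hη2⟩ := Multiset.mem_bind.mp hη
    obtain ⟨μ, hμ, hFe⟩ := Multiset.mem_map.mp hη2
    have hne1 : (z, μ) ≠ (lam, mu) := by
      intro h
      apply h0
      rw [← hFe, show z = lam from congrArg Prod.fst h, show μ = mu from congrArg Prod.snd h,
        hFlm, hwre]
    have hne2 : (z, μ) ≠ ((starRingEnd ℂ) lam, (starRingEnd ℂ) mu) := by
      intro h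
      apply h0
      rw [← hFe, show z = (starRingEnd ℂ) lam from congrArg Prod.fst h,
        show μ = (starRingEnd ℂ) mu from congrArg Prod.snd h, hFcc, Complex.neg_re, hwre,
        neg_zero]
    have hlt := hdom z hz μ hμ hne1 hne2
    rw [← hFe, hre]
    have : ustar * (α + γ * z.re + β * μ.re + δ * (z * μ).re) < ustar * ξ :=
      mul_lt_mul_of_pos_left hlt hu
    rw [huξ] at this
    linarith
  · have : (-(d : ℂ) + (ustar : ℂ) * ((α : ℂ) + (γ : ℂ) * lam + (β : ℂ) * mu
        + (δ : ℂ) * lam * mu)).re = -d + ustar * ξ := by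
      rw [hξdef]
      simp only [Complex.add_re, Complex.mul_re, Complex.add_im, Complex.mul_im,
        Complex.ofReal_re, Complex.ofReal_im, Complex.neg_re]
      ring
    rw [this]
    linarith [huξ]
  · have hZre : ((α : ℂ) + (γ : ℂ) * lam + (β : ℂ) * mu + (δ : ℂ) * lam * mu).re = ξ := by
      rw [hξdef]
      simp only [Complex.add_re, Complex.mul_re, Complex.add_im, Complex.mul_im,
        Complex.ofReal_re, Complex.ofReal_im]
      ring
    have hfun : (fun u : ℝ => (-(d : ℂ) + (u : ℂ) * ((α : ℂ) + (γ : ℂ) * lam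
        + (β : ℂ) * mu + (δ : ℂ) * lam * mu)).re)
        = fun u : ℝ => -d + u * ((α : ℂ) + (γ : ℂ) * lam + (β : ℂ) * mu
            + (δ : ℂ) * lam * mu).re := by
      funext u
      simp [Complex.add_re, Complex.mul_re, Complex.ofReal_re, Complex.ofReal_im,
        Complex.neg_re]
    rw [hfun, hZre]
    simpa using ((hasDerivAt_id ustar).mul_const ξ).const_add (-d : ℝ)
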